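/- arXiv:0902.2180 — 8 statements merged into one kernel-verified Lean document; each statement's English description precedes it below -/
import Mathlib

section
/- Let X be a set, x₀ ∈ X, and M a submonoid of Self(X) such that the evaluation map Φ : M → X, u ↦ u(x₀), is a bijection. If u ∈ M is a bijective function, then its inverse function u⁻¹ also belongs to M. -/
theorem stmt_3 {X : Type*} (x₀ : X) (M : Submonoid (Function.End X))
    (hΦ : Function.Bijective (fun u : M => (u : Function.End X) x₀))
    (u : Function.End X) (hu : u ∈ M) (hbij : Function.Bijective u)
    (v : Function.End X) (hvu : ∀ x, v (u x) = x) (huv : ∀ x, u (v x) = x) :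
    v ∈ M := by
  obtain ⟨w, hw⟩ := hΦ.2 (v x₀)
  have h1 : (⟨u, hu⟩ * w : M) = 1 := by
    apply hΦ.1
    show ((⟨u, hu⟩ * w : M) : Function.End X) x₀ = ((1 : M) : Function.End X) x₀
    have hw' : (w : Function.End X) x₀ = v x₀ := hw
    show u ((w : Function.End X) x₀) = _
    rw [hw', huv]
    rfl
  have h2 : ∀ x, u ((w : Function.End X) x) = x := by
    intro x
    have := congrArg (fun m : M => (m : Function.End X) x) h1
    exact this
  have h3 : v = (w : Function.End X) := by
    funext x
    exact hbij.1 (by rw [huv, h2])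
  rw [h3]; exact w.2
end

section
/- Let X be a set, x₀ ∈ X, and M a submonoid of Self(X) such that the evaluation map Φ : M → X, u ↦ u(x₀), is a bijection. Then the monoid M is a group if and only if every element of M is a bijective function. -/
theorem stmt_4 {X : Type*} (x₀ : X) (M : Submonoid (Function.End X))
    (hΦ : Function.Bijective (fun u : M => (u : Function.End X) x₀)) :
    (∀ u ∈ M, ∃ v ∈ M, u * v = 1 ∧ v * u = 1) ↔
      (∀ u ∈ M, Function.Bijective u) := by
  constructor
  · rintro h u hu
    obtain ⟨v, -, huv, hvu⟩ := h u hu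
    exact Function.bijective_iff_has_inverse.mpr
      ⟨v, fun x => congrFun hvu x, fun x => congrFun huv x⟩
  · intro h u hu
    have hbij := h u hu
    -- pick y with u y = x₀
    obtain ⟨y, hy⟩ := hbij.2 x₀
    -- pick v ∈ M with v x₀ = y
    obtain ⟨⟨v, hv⟩, hvy⟩ := hΦ.2 y
    refine ⟨v, hv, ?_, ?_⟩
    · have : (⟨u * v, M.mul_mem hu hv⟩ : M) = ⟨1, M.one_mem⟩ := by
        apply hΦ.1
        show (u * v) x₀ = (1 : Function.End X) x₀
        show u (v x₀) = x₀
        exact (show v x₀ = y from hvy) ▸ hy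
      exact congrArg Subtype.val this
    · funext x
      apply hbij.1
      show u ((v * u) x) = u x
      have huv : u * v = 1 := by
        have : (⟨u * v, M.mul_mem hu hv⟩ : M) = ⟨1, M.one_mem⟩ := by
          apply hΦ.1
          show u (v x₀) = x₀
          exact (show v x₀ = y from hvy) ▸ hy
        exact congrArg Subtype.val this
      calc u ((v * u) x) = (u * v) (u x) := rfl
        _ = u x := by rw [huv]; rfl
end

section
/- Let X be a set, x₀ ∈ X, and M a submonoid of Self(X) such that the evaluation map Φ : M → X, u ↦ u(x₀), is a bijection. Then M obeys the left cancellation law (u ∘ u₁ = u ∘ u₂ implies u₁ = u₂ for u, u₁, u₂ ∈ M) if and only if every element of M is an injective function. -/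
theorem stmt_5 {X : Type*} (x₀ : X) (M : Submonoid (Function.End X))
    (hΦ : Function.Bijective (fun u : M => (u : Function.End X) x₀)) :
    (∀ u ∈ M, ∀ u₁ ∈ M, ∀ u₂ ∈ M, u * u₁ = u * u₂ → u₁ = u₂) ↔
      (∀ u ∈ M, Function.Injective u) := by
  constructor
  · intro hc u hu x y hxy
    obtain ⟨u₁, h₁⟩ := hΦ.2 x
    obtain ⟨u₂, h₂⟩ := hΦ.2 y
    simp only at h₁ h₂
    have key : u * (u₁ : Function.End X) = u * (u₂ : Function.End X) := by
      have : (⟨u, hu⟩ * u₁ : M) = ⟨u, hu⟩ * u₂ := by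
        apply hΦ.1
        simp only [Submonoid.coe_mul]
        show u ((u₁ : Function.End X) x₀) = u ((u₂ : Function.End X) x₀)
        rw [h₁, h₂, hxy]
      exact congrArg (Subtype.val) this
    have := hc u hu u₁ u₁.2 u₂ u₂.2 key
    rw [← h₁, ← h₂]
    show (u₁ : Function.End X) x₀ = (u₂ : Function.End X) x₀
    rw [this]
  · intro hi u hu u₁ _ u₂ _ h
    funext x
    exact hi u hu (congrFun h x)
end

section
/- Let M be a commutative submonoid of Self(X) and x₀ ∈ X. Then the evaluation map Φ : M → X, u ↦ u(x₀), is a bijection if and only if the only M-invariant subset of X containing x₀ is X itself. -/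
theorem stmt_6 {X : Type*} (x₀ : X) (M : Submonoid (Function.End X))
    (hcomm : ∀ u ∈ M, ∀ v ∈ M, u * v = v * u) :
    Function.Bijective (fun u : M => (u : Function.End X) x₀) ↔
      (∀ Y : Set X, x₀ ∈ Y → (∀ u ∈ M, ∀ x ∈ Y, u x ∈ Y) → Y = Set.univ) := by
  constructor
  · rintro ⟨hinj, hsurj⟩ Y hx₀ hinv
    ext x
    simp only [Set.mem_univ, iff_true]
    obtain ⟨u, hu⟩ := hsurj x
    exact hu ▸ hinv u u.2 x₀ hx₀
  · intro hmin
    constructor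
    · intro u v huv
      have hY : {x : X | (u : Function.End X) x = (v : Function.End X) x} = Set.univ := by
        refine hmin _ huv ?_
        intro w hw x hx
        have h1 : (u : Function.End X) * w = w * (u : Function.End X) := hcomm _ u.2 _ hw
        have h2 : (v : Function.End X) * w = w * (v : Function.End X) := hcomm _ v.2 _ hw
        show (u : Function.End X) (w x) = (v : Function.End X) (w x)
        have e1 : (u : Function.End X) (w x) = w ((u : Function.End X) x) :=
          congrFun h1 x
        have e2 : (v : Function.End X) (w x) = w ((v : Function.End X) x) :=
          congrFun h2 x
        rw [e1, e2, hx]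
      have : ∀ y, (u : Function.End X) y = (v : Function.End X) y := fun y => by
        have : y ∈ {x : X | (u : Function.End X) x = (v : Function.End X) x} := by
          rw [hY]; trivial
        exact this
      exact Subtype.ext (funext this)
    · intro x
      have hY : {y : X | ∃ u : M, (u : Function.End X) x₀ = y} = Set.univ := by
        apply hmin
        · exact ⟨1, rfl⟩
        · rintro w hw y ⟨u, rfl⟩
          refine ⟨⟨w, hw⟩ * u, ?_⟩
          simp [Function.End.mul_def, Function.comp]
      have : x ∈ ({y : X | ∃ u : M, (u : Function.End X) x₀ = y}) := hY ▸ Set.mem_univ x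
      exact this
end

section
/- Let (X, f, x₀) be a minimal counting system, i.e., the only f-invariant subset of X containing x₀ is X itself. Then there exists a unique binary operation + on X such that (X, +, x₀) is a commutative monoid with unit x₀ satisfying f(x) = f(x₀) + x for all x ∈ X. -/
theorem stmt_8 {X : Type*} (f : X → X) (x₀ : X)
    (hmin : ∀ Y : Set X, x₀ ∈ Y → (∀ x ∈ Y, f x ∈ Y) → Y = Set.univ) :
    ∃! op : X → X → X,
      (∀ a b c, op (op a b) c = op a (op b c)) ∧
      (∀ a b, op a b = op b a) ∧
      (∀ a, op x₀ a = a) ∧ (∀ a, op a x₀ = a) ∧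
      (∀ x, f x = op (f x₀) x) := by
  classical
  -- every element is an iterate of f on x₀
  have hsurj : ∀ x : X, ∃ n : ℕ, f^[n] x₀ = x := by
    have := hmin {x | ∃ n : ℕ, f^[n] x₀ = x} ⟨0, rfl⟩ (by
      rintro x ⟨n, rfl⟩; exact ⟨n + 1, Function.iterate_succ_apply' f n x₀⟩)
    intro x
    have : x ∈ ({x | ∃ n : ℕ, f^[n] x₀ = x} : Set X) := this ▸ Set.mem_univ x
    exact this
  -- key: equal iterates at x₀ agree everywhere
  have key : ∀ n m : ℕ, f^[n] x₀ = f^[m] x₀ → ∀ y, f^[n] y = f^[m] y := by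
    intro n m h y
    obtain ⟨k, rfl⟩ := hsurj y
    calc f^[n] (f^[k] x₀) = f^[k] (f^[n] x₀) := by
          rw [← Function.iterate_add_apply, ← Function.iterate_add_apply, Nat.add_comm]
      _ = f^[k] (f^[m] x₀) := by rw [h]
      _ = f^[m] (f^[k] x₀) := by
          rw [← Function.iterate_add_apply, ← Function.iterate_add_apply, Nat.add_comm]
  set idx : X → ℕ := fun x => (hsurj x).choose with hidx
  have hspec : ∀ x, f^[idx x] x₀ = x := fun x => (hsurj x).choose_spec
  set op : X → X → X := fun x y => f^[idx x] y with hop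
  -- op a b = f^[n] b whenever f^[n] x₀ = a
  have hrep : ∀ (n : ℕ) (b : X), op (f^[n] x₀) b = f^[n] b := by
    intro n b
    exact key _ n (hspec _) b
  have e : ∀ a b, op a b = f^[idx a + idx b] x₀ := by
    intro a b
    show f^[idx a] b = _
    rw [Function.iterate_add_apply]
    exact congrArg _ (hspec b).symm
  have assoc : ∀ a b c, op (op a b) c = op a (op b c) := by
    intro a b c
    rw [e a b, hrep, Function.iterate_add_apply]
  have comm : ∀ a b, op a b = op b a := by
    intro a b
    rw [e, e, Nat.add_comm]
  have hl : ∀ a, op x₀ a = a := by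
    intro a
    have := hrep 0 a
    simpa using this
  have hr : ∀ a, op a x₀ = a := fun a => hspec a
  have hf : ∀ x, f x = op (f x₀) x := by
    intro x
    have := hrep 1 x
    simpa using this.symm
  refine ⟨op, ⟨assoc, comm, hl, hr, hf⟩, ?_⟩
  rintro op' ⟨assoc', comm', hl', hr', hf'⟩
  funext a b
  obtain ⟨n, rfl⟩ := hsurj a
  have h2 : ∀ n b, op' (f^[n] x₀) b = f^[n] b := by
    intro n
    induction n with
    | zero => intro b; simpa using hl' b
    | succ k ih =>
      intro b
      rw [Function.iterate_succ_apply' f k x₀, hf' (f^[k] x₀), assoc', ih, ← hf',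
        Function.iterate_succ_apply']
  rw [h2, hrep]
end

section
/- Let M be a commutative monoid generated by a single element a₀. Then there exists a unique biadditive map ⋄ : M × M → M such that a₀ ⋄ a₀ = a₀. Moreover, ⋄ is associative, commutative, and satisfies a₀ ⋄ a = a for all a ∈ M. -/
theorem stmt_11 {M : Type*} [AddCommMonoid M] (a₀ : M)
    (hgen : ∀ N : AddSubmonoid M, a₀ ∈ N → N = ⊤) :
    (∃! d : M → M → M,
      ((∀ a, d a 0 = 0 ∧ ∀ b c, d a (b + c) = d a b + d a c) ∧
       (∀ a, d 0 a = 0 ∧ ∀ b c, d (b + c) a = d b a + d c a)) ∧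
      d a₀ a₀ = a₀) ∧
    (∀ d : M → M → M,
      (((∀ a, d a 0 = 0 ∧ ∀ b c, d a (b + c) = d a b + d a c) ∧
        (∀ a, d 0 a = 0 ∧ ∀ b c, d (b + c) a = d b a + d c a)) ∧
       d a₀ a₀ = a₀) →
      (∀ a b c, d (d a b) c = d a (d b c)) ∧
      (∀ a b, d a b = d b a) ∧
      (∀ a, d a₀ a = a)) := by
  have hex : ∀ a : M, ∃ n : ℕ, n • a₀ = a := by
    intro a
    have h := hgen (AddSubmonoid.closure {a₀})
      (AddSubmonoid.subset_closure (Set.mem_singleton a₀))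
    have ha : a ∈ AddSubmonoid.closure ({a₀} : Set M) := h ▸ AddSubmonoid.mem_top a
    exact (AddSubmonoid.mem_closure_singleton).1 ha
  have key : ∀ (n m : ℕ), n • a₀ = m • a₀ → ∀ b : M, n • b = m • b := by
    intro n m h b
    obtain ⟨k, rfl⟩ := hex b
    rw [smul_comm n k, smul_comm m k, h]
  choose f hf using hex
  set d : M → M → M := fun a b => f a • b with hd
  have dprop : ((∀ a, d a 0 = 0 ∧ ∀ b c, d a (b + c) = d a b + d a c) ∧
       (∀ a, d 0 a = 0 ∧ ∀ b c, d (b + c) a = d b a + d c a)) ∧ d a₀ a₀ = a₀ := by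
    refine ⟨⟨fun a => ⟨smul_zero _, fun b c => smul_add _ _ _⟩,
      fun a => ⟨?_, ?_⟩⟩, hf a₀⟩
    · have h0 : f (0 : M) • a₀ = (0:ℕ) • a₀ := by rw [hf]; simp
      simpa using key _ _ h0 a
    · intro b c
      have h1 : f (b + c) • a₀ = (f b + f c) • a₀ := by
        rw [hf, add_smul, hf, hf]
      have := key _ _ h1 a
      simpa [add_smul] using this
  -- key computation for arbitrary biadditive d'
  have heq : ∀ d' : M → M → M,
      (((∀ a, d' a 0 = 0 ∧ ∀ b c, d' a (b + c) = d' a b + d' a c) ∧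
        (∀ a, d' 0 a = 0 ∧ ∀ b c, d' (b + c) a = d' b a + d' c a)) ∧
       d' a₀ a₀ = a₀) → d' = d := by
    rintro d' ⟨⟨hr, hl⟩, h00⟩
    have hleft : ∀ (n : ℕ) (x y : M), d' (n • x) y = n • d' x y := by
      intro n x y
      induction n with
      | zero => simpa using (hl y).1
      | succ k ih => rw [succ_nsmul, (hl y).2, ih, succ_nsmul]
    have hright : ∀ (n : ℕ) (x y : M), d' x (n • y) = n • d' x y := by
      intro n x y
      induction n with
      | zero => simpa using (hr x).1
      | succ k ih => rw [succ_nsmul, (hr x).2, ih, succ_nsmul]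
    funext a b
    calc d' a b = d' (f a • a₀) (f b • a₀) := by rw [hf, hf]
      _ = f a • (f b • d' a₀ a₀) := by rw [hleft, hright]
      _ = f a • (f b • a₀) := by rw [h00]
      _ = f a • b := by rw [hf]
  constructor
  · exact ⟨d, dprop, heq⟩
  · intro d' hp
    rw [heq d' hp]
    have hmul : ∀ a b : M, f a • b = (f a * f b) • a₀ := by
      intro a b
      rw [mul_smul, hf]
    have hf2 : ∀ (a b x : M), f (f a • b) • x = (f a * f b) • x := by
      intro a b x
      apply key
      rw [hf]
      exact hmul a b
    refine ⟨?_, ?_, ?_⟩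
    · intro a b c
      show f (f a • b) • c = f a • (f b • c)
      rw [hf2, mul_smul]
    · intro a b
      show f a • b = f b • a
      rw [hmul a b, hmul b a, mul_comm]
    · intro a
      show f a₀ • a = a
      have h1 : f a₀ • a₀ = (1:ℕ) • a₀ := by rw [hf]; simp
      simpa using key _ _ h1 a
end

section
/- Let M, N be commutative monoids and (a_s)_{s ∈ S} a family generating M. Suppose for each s ∈ S there exist monoid homomorphisms λ_s, λ'_s : M → N such that λ_s(a_t) = λ'_t(a_s) for all s, t ∈ S. Then there exists a unique biadditive map ⋄ : M × M → N such that a_s ⋄ a_t = λ_s(a_t) for all s, t ∈ S. -/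
theorem stmt_13 {M N : Type*} [AddCommMonoid M] [AddCommMonoid N] {S : Type*}
    (a : S → M)
    (hgen : ∀ P : AddSubmonoid M, (∀ s, a s ∈ P) → P = ⊤)
    (lam lam' : S → (M →+ N))
    (h : ∀ s t, lam s (a t) = lam' t (a s)) :
    ∃! d : M → M → N,
      ((∀ x, d x 0 = 0 ∧ ∀ b c, d x (b + c) = d x b + d x c) ∧
       (∀ x, d 0 x = 0 ∧ ∀ b c, d (b + c) x = d b x + d c x)) ∧
      (∀ s t, d (a s) (a t) = lam s (a t)) := by
  have ext : ∀ f g : M →+ N, (∀ s, f (a s) = g (a s)) → f = g := by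
    intro f g hfg
    have hP := hgen (AddMonoidHom.eqLocusM f g) (fun s => hfg s)
    ext x
    have hx : x ∈ AddMonoidHom.eqLocusM f g := by rw [hP]; trivial
    exact hx
  have hex : ∀ x : M, ∃ f : M →+ N, ∀ t, f (a t) = lam' t x := by
    intro x
    let P : AddSubmonoid M :=
      { carrier := {x | ∃ f : M →+ N, ∀ t, f (a t) = lam' t x}
        zero_mem' := ⟨0, fun t => by simp⟩
        add_mem' := by
          rintro y z ⟨f, hf⟩ ⟨g, hg⟩
          exact ⟨f + g, fun t => by simp [hf, hg]⟩ }
    have hP := hgen P (fun s => ⟨lam s, fun t => h s t⟩)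
    have hx : x ∈ P := by rw [hP]; trivial
    exact hx
  set F : M → (M →+ N) := fun x => (hex x).choose with hFdef
  have hF : ∀ x t, F x (a t) = lam' t x := fun x => (hex x).choose_spec
  have hF0 : F 0 = 0 := ext _ _ (fun t => by simp [hF])
  have hFadd : ∀ x y, F (x + y) = F x + F y := by
    intro x y
    apply ext
    intro t
    simp [hF, map_add]
  have hFa : ∀ s, F (a s) = lam s := by
    intro s
    apply ext
    intro t
    rw [hF, h]
  refine ⟨fun x y => F x y, ⟨⟨fun x => ⟨by simp, fun b c => by simp⟩,
    fun x => ⟨by simp [hF0], fun b c => by simp [hFadd]⟩⟩,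
    fun s t => by show F (a s) (a t) = _; rw [hFa]⟩, ?_⟩
  rintro d ⟨⟨h1, h2⟩, h3⟩
  funext x y
  -- first: d (a s) = lam s as functions
  have key : ∀ s z, d (a s) z = lam s z := by
    intro s z
    let Q : AddSubmonoid M :=
      { carrier := {z | d (a s) z = lam s z}
        zero_mem' := by simp [(h1 (a s)).1]
        add_mem' := by
          intro u v hu hv
          simp only [Set.mem_setOf_eq] at *
          rw [(h1 (a s)).2, hu, hv, map_add] }
    have hQ := hgen Q (fun t => h3 s t)
    have : z ∈ Q := by rw [hQ]; trivial
    exact this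
  have key2 : ∀ z, d z y = F z y := by
    intro z
    let Q : AddSubmonoid M :=
      { carrier := {z | d z y = F z y}
        zero_mem' := by simp [(h2 y).1, hF0]
        add_mem' := by
          intro u v hu hv
          simp only [Set.mem_setOf_eq] at *
          rw [(h2 y).2, hu, hv, hFadd]; simp }
    have hQ := hgen Q (fun s => by
      show d (a s) y = F (a s) y
      rw [key s y, hFa])
    have : z ∈ Q := by rw [hQ]; trivial
    exact this
  exact key2 x
end

section
/- Let (X, f, x₀) be a minimal counting system with associated monoid operation +. Then for all x₁, x₂ ∈ X there exists x ∈ X such that either x₁ = x + x₂ or x₂ = x + x₁. -/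
theorem stmt_17 {X : Type*} (f : X → X) (x₀ : X)
    (hmin : ∀ Y : Set X, x₀ ∈ Y → (∀ x ∈ Y, f x ∈ Y) → Y = Set.univ)
    (op : X → X → X)
    (hassoc : ∀ a b c, op (op a b) c = op a (op b c))
    (hcomm : ∀ a b, op a b = op b a)
    (hle : ∀ a, op x₀ a = a) (hre : ∀ a, op a x₀ = a)
    (hstar : ∀ x, f x = op (f x₀) x) :
    ∀ x₁ x₂ : X, ∃ x : X, x₁ = op x x₂ ∨ x₂ = op x x₁ := by
  have hsurj : ∀ x : X, ∃ n : ℕ, x = f^[n] x₀ := by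
    intro x
    have h := hmin {x | ∃ n : ℕ, x = f^[n] x₀} ⟨0, rfl⟩ (by
      rintro x ⟨n, rfl⟩
      exact ⟨n + 1, (Function.iterate_succ_apply' f n x₀).symm⟩)
    have : x ∈ (Set.univ : Set X) := trivial
    rwa [← h] at this
  have hadd : ∀ k n : ℕ, f^[k + n] x₀ = op (f^[k] x₀) (f^[n] x₀) := by
    intro k n
    induction k with
    | zero => simp [hle]
    | succ k ih =>
      have : k + 1 + n = (k + n) + 1 := by ring
      rw [this, Function.iterate_succ_apply', ih, hstar,
        Function.iterate_succ_apply' f k x₀, hstar (f^[k] x₀), hassoc]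
  intro x₁ x₂
  obtain ⟨m, rfl⟩ := hsurj x₁
  obtain ⟨n, rfl⟩ := hsurj x₂
  rcases le_total n m with h | h
  · exact ⟨f^[m - n] x₀, Or.inl (by rw [← hadd, Nat.sub_add_cancel h])⟩
  · exact ⟨f^[n - m] x₀, Or.inr (by rw [← hadd, Nat.sub_add_cancel h])⟩
end
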